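/- Let p_t(x,y) be a heat kernel on a metric measure space (E, d, m) with diam(E) = 1 and m(E) < ∞, satisfying p_t(x,y) ≤ c_2 t^{−d_f/d_w} exp{−c_3 (d(x,y)^{d_w}/t)^{1/(d_w−1)}} for t ∈ (0,1], and suppose the volume bounds c_4 r^{d_f} ≤ m(B(x,r)) ≤ c_5 r^{d_f} hold for r ∈ (0,1]. If p ≥ 2 is an integer with d_f − p(d_f − d_w) > 0, then sup_{y∈E} ∫_E R_1(x,y)^p m(dx) < ∞, where R_1(x,y) = ∫_0^∞ e^{−t} p_t(x,y) dt. -/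

import Mathlib

open MeasureTheory Real Set

lemma aux_exp_bound (q : ℝ) (hq : 0 < q) :
    ∃ C : ℝ, 1 ≤ C ∧ ∀ u : ℝ, 0 < u → Real.exp (-u) ≤ C * u ^ (-q) := by
  set n := Nat.ceil q with hn
  have hC1 : (1:ℝ) ≤ (Nat.factorial n : ℝ) := by
    exact_mod_cast Nat.one_le_iff_ne_zero.2 (Nat.factorial_ne_zero _)
  refine ⟨(Nat.factorial n : ℝ), hC1, ?_⟩
  intro u hu
  rcases le_or_gt u 1 with h | h
  · have h1 : Real.exp (-u) ≤ 1 := Real.exp_le_one_iff.2 (by linarith)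
    have h2 : (1:ℝ) ≤ u ^ (-q) :=
      Real.one_le_rpow_of_pos_of_le_one_of_nonpos hu h (by linarith)
    nlinarith
  · have h1 : u ^ q ≤ u ^ (n : ℝ) :=
      Real.rpow_le_rpow_of_exponent_le h.le ((Nat.le_ceil q).trans (le_refl _))
    have h2 : u ^ n ≤ (Nat.factorial n : ℝ) * Real.exp u := by
      have h3 := Real.pow_div_factorial_le_exp (x := u) (le_of_lt (lt_trans one_pos h)) n
      have h4 : (0:ℝ) < (Nat.factorial n : ℝ) := by positivity
      rw [div_le_iff₀ h4] at h3
      linarith [h3]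
    have h2' : u ^ (n : ℝ) ≤ (Nat.factorial n : ℝ) * Real.exp u := by
      rw [Real.rpow_natCast]; exact h2
    have h3 : u ^ q * Real.exp (-u) ≤ (Nat.factorial n : ℝ) := by
      rw [Real.exp_neg]
      have he := Real.exp_pos u
      rw [mul_inv_le_iff₀ he]
      calc u ^ q ≤ u ^ (n:ℝ) := h1
        _ ≤ (Nat.factorial n : ℝ) * Real.exp u := h2'
    have hpos : (0:ℝ) < u ^ q := Real.rpow_pos_of_pos hu q
    have h5 : Real.exp (-u) ≤ (Nat.factorial n : ℝ) / u ^ q := by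
      rw [le_div_iff₀ hpos]; nlinarith
    calc Real.exp (-u) ≤ (Nat.factorial n : ℝ) / u ^ q := h5
      _ = (Nat.factorial n : ℝ) * u ^ (-q) := by
          rw [Real.rpow_neg hu.le, div_eq_mul_inv]

lemma aux_tail_integral {E : Type*} [MetricSpace E] [MeasurableSpace E] [BorelSpace E]
    (m : Measure E) [IsFiniteMeasure m] (c₅ df γ : ℝ) (hc₅ : 0 < c₅)
    (hγ0 : 0 < γ) (hγdf : γ < df)
    (hvol : ∀ y : E, ∀ r ∈ Set.Ioc (0:ℝ) 1, (m (Metric.ball y r)).toReal ≤ c₅ * r ^ df) :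
    ∃ M₀ : ℝ, ∀ y : E, Integrable (fun x => dist x y ^ (-γ)) m ∧
      ∫ x, dist x y ^ (-γ) ∂m ≤ M₀ := by
  have hdfγ : (1:ℝ) < df / γ := (one_lt_div hγ0).2 hγdf
  set J : ℝ := ∫ t in Ioi (1:ℝ), c₅ * t ^ (-(df/γ)) with hJ
  have hJint : IntegrableOn (fun t : ℝ => c₅ * t ^ (-(df/γ))) (Ioi (1:ℝ)) :=
    (integrableOn_Ioi_rpow_of_lt (by linarith) one_pos).const_mul c₅
  have hJnn : (0:ℝ) ≤ J := by
    apply setIntegral_nonneg measurableSet_Ioi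
    intro t ht
    have : (0:ℝ) < t := lt_trans one_pos ht
    positivity
  refine ⟨(m Set.univ).toReal + J, ?_⟩
  intro y
  set f : E → ℝ := fun x => dist x y ^ (-γ) with hf
  have hfm : Measurable f :=
    Measurable.pow_const ((continuous_id.dist continuous_const).measurable) (-γ)
  have hfnn : ∀ x, 0 ≤ f x := fun x => Real.rpow_nonneg dist_nonneg _
  -- layer cake
  have hlc : ∫⁻ x, ENNReal.ofReal (f x) ∂m = ∫⁻ t in Ioi 0, m {x | t < f x} :=
    lintegral_eq_lintegral_meas_lt m (Filter.Eventually.of_forall hfnn) hfm.aemeasurable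
  -- bound the RHS
  have hsplit : (Ioi (0:ℝ)) = Ioc (0:ℝ) 1 ∪ Ioi 1 := (Ioc_union_Ioi_eq_Ioi zero_le_one).symm
  have hbd : ∫⁻ t in Ioi (0:ℝ), m {x | t < f x}
      ≤ m Set.univ + ENNReal.ofReal J := by
    rw [hsplit, lintegral_union measurableSet_Ioi Ioc_disjoint_Ioi_same]
    gcongr
    · calc ∫⁻ t in Ioc (0:ℝ) 1, m {x | t < f x}
          ≤ ∫⁻ _ in Ioc (0:ℝ) 1, m Set.univ := by
            exact lintegral_mono fun t => measure_mono (subset_univ _)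
        _ = m Set.univ * ENNReal.ofReal 1 := by
            rw [setLIntegral_const, Real.volume_Ioc]; norm_num
        _ ≤ m Set.univ := by simp
    · have hptwise : ∀ t ∈ Ioi (1:ℝ), m {x | t < f x} ≤ ENNReal.ofReal (c₅ * t ^ (-(df/γ))) := by
        intro t ht
        have ht1 : (1:ℝ) < t := ht
        have ht0 : (0:ℝ) < t := lt_trans one_pos ht1
        set r := t ^ (-γ⁻¹) with hr
        have hr0 : 0 < r := Real.rpow_pos_of_pos ht0 _
        have hr1 : r ≤ 1 := Real.rpow_le_one_of_one_le_of_nonpos ht1.le (neg_nonpos.2 (inv_nonneg.2 hγ0.le))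
        have hsub : {x | t < f x} ⊆ Metric.ball y r := by
          intro x hx
          simp only [mem_setOf_eq] at hx
          have hx' : t < dist x y ^ (-γ) := hx
          have hd0 : 0 < dist x y := by
            rcases eq_or_lt_of_le (dist_nonneg : (0:ℝ) ≤ dist x y) with h0 | h0
            · exfalso
              rw [← h0, Real.zero_rpow (neg_ne_zero.2 (ne_of_gt hγ0))] at hx'
              linarith
            · exact h0
          have hlt : (dist x y ^ (-γ)) ^ (-γ⁻¹) < t ^ (-γ⁻¹) :=
            Real.rpow_lt_rpow_of_neg ht0 hx' (neg_neg_iff_pos.2 (inv_pos.2 hγ0))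
          have heq : (dist x y ^ (-γ)) ^ (-γ⁻¹) = dist x y := by
            rw [← Real.rpow_mul dist_nonneg]
            rw [show (-γ) * (-γ⁻¹) = γ * γ⁻¹ by ring, mul_inv_cancel₀ (ne_of_gt hγ0), Real.rpow_one]
          rw [heq] at hlt
          exact Metric.mem_ball.2 hlt
        calc m {x | t < f x} ≤ m (Metric.ball y r) := measure_mono hsub
          _ = ENNReal.ofReal ((m (Metric.ball y r)).toReal) := (ENNReal.ofReal_toReal (measure_ne_top _ _)).symm
          _ ≤ ENNReal.ofReal (c₅ * r ^ df) := ENNReal.ofReal_le_ofReal (hvol y r ⟨hr0, hr1⟩)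
          _ = ENNReal.ofReal (c₅ * t ^ (-(df/γ))) := by
              congr 1
              rw [hr, ← Real.rpow_mul ht0.le]
              congr 1
              rw [div_eq_mul_inv]; ring
      calc ∫⁻ t in Ioi (1:ℝ), m {x | t < f x}
          ≤ ∫⁻ t in Ioi (1:ℝ), ENNReal.ofReal (c₅ * t ^ (-(df/γ))) := by
            apply lintegral_mono_ae
            filter_upwards [ae_restrict_mem measurableSet_Ioi] with t ht
            exact hptwise t ht
        _ = ENNReal.ofReal J := by
            rw [hJ, ← ofReal_integral_eq_lintegral_ofReal hJint]
            filter_upwards [ae_restrict_mem measurableSet_Ioi] with t ht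
            have : (0:ℝ) < t := lt_trans one_pos ht
            positivity
  have hfin : ∫⁻ x, ENNReal.ofReal (f x) ∂m ≤ m Set.univ + ENNReal.ofReal J := hlc ▸ hbd
  have htop : m Set.univ + ENNReal.ofReal J ≠ ⊤ := by
    exact ENNReal.add_ne_top.2 ⟨measure_ne_top _ _, ENNReal.ofReal_ne_top⟩
  have hint : Integrable f m := by
    refine ⟨hfm.aestronglyMeasurable, ?_⟩
    rw [hasFiniteIntegral_iff_norm]
    have : ∀ x, ENNReal.ofReal ‖f x‖ = ENNReal.ofReal (f x) := by
      intro x; rw [Real.norm_of_nonneg (hfnn x)]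
    simp_rw [this]
    exact lt_of_le_of_lt hfin (lt_top_iff_ne_top.2 htop)
  refine ⟨hint, ?_⟩
  rw [integral_eq_lintegral_of_nonneg_ae (Filter.Eventually.of_forall hfnn) hfm.aestronglyMeasurable]
  calc (∫⁻ x, ENNReal.ofReal (f x) ∂m).toReal ≤ (m Set.univ + ENNReal.ofReal J).toReal :=
        ENNReal.toReal_mono htop hfin
    _ = (m Set.univ).toReal + J := by
        rw [ENNReal.toReal_add (measure_ne_top _ _) ENNReal.ofReal_ne_top, ENNReal.toReal_ofReal hJnn]

set_option maxHeartbeats 1000000 in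
/-- Under sub-Gaussian heat kernel upper bounds and Ahlfors-type volume bounds with
`d_f − p(d_f − d_w) > 0`, the 1-order resolvent kernel lies in `Lᵖ` uniformly:
`sup_y ∫ R₁(x,y)^p m(dx) < ∞`. -/
theorem resolvent_kernel_Lp_bound
    {E : Type*} [MetricSpace E] [MeasurableSpace E] [BorelSpace E]
    (m : Measure E) [IsFiniteMeasure m]
    (hdiam : Metric.diam (Set.univ : Set E) = 1)
    (pk : ℝ → E → E → ℝ)
    (hmeas : Measurable fun q : ℝ × E × E => pk q.1 q.2.1 q.2.2)
    (hnonneg : ∀ t : ℝ, 0 < t → ∀ x y, 0 ≤ pk t x y)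
    (hsymm : ∀ t : ℝ, 0 < t → ∀ x y, pk t x y = pk t y x)
    (hck : ∀ s t : ℝ, 0 < s → 0 < t → ∀ x y,
      pk (s + t) x y = ∫ z, pk s x z * pk t z y ∂m)
    (hsub : ∀ t : ℝ, 0 < t → ∀ x, ∫ y, pk t x y ∂m ≤ 1)
    (df dw c₂ c₃ c₄ c₅ : ℝ) (hdf : 1 ≤ df) (hdw : 2 ≤ dw)
    (hc₂ : 0 < c₂) (hc₃ : 0 < c₃) (hc₄ : 0 < c₄) (hc₅ : 0 < c₅)
    (hupper : ∀ t ∈ Set.Ioc (0:ℝ) 1, ∀ x y,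
      pk t x y ≤ c₂ * t ^ (-(df / dw)) *
        Real.exp (-c₃ * (dist x y ^ dw / t) ^ (1 / (dw - 1))))
    (hvol : ∀ x : E, ∀ r ∈ Set.Ioc (0:ℝ) 1,
      c₄ * r ^ df ≤ (m (Metric.ball x r)).toReal ∧
        (m (Metric.ball x r)).toReal ≤ c₅ * r ^ df)
    (p : ℕ) (hp : 2 ≤ p) (hdim : 0 < df - p * (df - dw)) :
    ∃ M : ℝ, ∀ y : E,
      ∫ x, (∫ t in Set.Ioi (0:ℝ), Real.exp (-t) * pk t x y) ^ p ∂m ≤ M := by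
  have hdw0 : (0:ℝ) < dw := by linarith
  have hdf0 : (0:ℝ) < df := by linarith
  have hp0 : (0:ℝ) < (p:ℝ) := by exact_mod_cast lt_of_lt_of_le two_pos hp
  obtain ⟨α, hα⟩ : ∃ a : ℝ, a = df / dw := ⟨_, rfl⟩
  simp only [← hα] at hupper
  have hα0 : 0 < α := hα ▸ div_pos hdf0 hdw0
  obtain ⟨θ, hθdef⟩ : ∃ a : ℝ, a = max (df - dw) 0 := ⟨_, rfl⟩
  have hθ0 : 0 ≤ θ := hθdef ▸ le_max_right _ _
  have hθ1 : df - dw ≤ θ := hθdef ▸ le_max_left _ _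
  have hpθ : (p:ℝ) * θ < df := by
    rcases max_cases (df - dw) 0 with ⟨h1, _⟩ | ⟨h1, _⟩
    · rw [hθdef, h1]; linarith
    · rw [hθdef, h1]; simpa using hdf0
  obtain ⟨ε, hεdef⟩ : ∃ a : ℝ, a = (df - p*θ)/(2*p*dw) := ⟨_, rfl⟩
  have hε : 0 < ε := by
    rw [hεdef]
    apply div_pos (by linarith) (by positivity)
  obtain ⟨s, hsdef⟩ : ∃ a : ℝ, a = θ/dw + ε := ⟨_, rfl⟩
  have hs : 0 < s := by
    rw [hsdef]
    exact add_pos_of_nonneg_of_pos (by positivity) hε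
  have hsα : -1 < s - α := by
    have h2 : (df - dw)/dw ≤ θ/dw := by gcongr
    have h3 : (df - dw)/dw = α - 1 := by
      rw [hα, sub_div, div_self (ne_of_gt hdw0)]
    rw [hsdef]
    linarith
  have hsα1 : 0 < s - α + 1 := by linarith
  obtain ⟨γ, hγdef⟩ : ∃ a : ℝ, a = (p:ℝ) * (dw * s) := ⟨_, rfl⟩
  have hγ0 : 0 < γ := by rw [hγdef]; positivity
  have hγdf : γ < df := by
    have h1 : dw * (θ/dw) = θ := by field_simp
    have h2 : (p:ℝ) * (dw * ε) = (df - p*θ)/2 := by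
      rw [hεdef]; field_simp
    have : γ = (p:ℝ)*θ + (df - p*θ)/2 := by
      rw [hγdef, hsdef, mul_add, mul_add, h1, h2]
    rw [this]; linarith
  obtain ⟨q, hqdef⟩ : ∃ a : ℝ, a = s * (dw - 1) := ⟨_, rfl⟩
  have hdw1 : (1:ℝ) ≤ dw - 1 := by linarith
  have hq : 0 < q := by rw [hqdef]; exact mul_pos hs (by linarith)
  obtain ⟨C, hC1, hCexp⟩ := aux_exp_bound q hq
  obtain ⟨K, hKdef⟩ : ∃ a : ℝ, a = c₂ * (2:ℝ) ^ α := ⟨_, rfl⟩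
  have hK0 : 0 < K := by rw [hKdef]; positivity
  obtain ⟨A, hAdef⟩ : ∃ a : ℝ, a = c₂ * C * c₃ ^ (-q) := ⟨_, rfl⟩
  have hA0 : 0 < A := by rw [hAdef]; positivity
  -- measurability of slices
  have hmeas2 : ∀ t : ℝ, ∀ x : E, Measurable (fun z => pk t x z) := by
    intro t x
    exact hmeas.comp (measurable_const.prodMk (measurable_const.prodMk measurable_id))
  -- basic upper bound on (0,1]
  have hbd0 : ∀ t : ℝ, 0 < t → t ≤ 1 → ∀ x z, pk t x z ≤ c₂ * t ^ (-α) := by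
    intro t ht0 ht1 x z
    have h1 := hupper t ⟨ht0, ht1⟩ x z
    have h2 : Real.exp (-c₃ * (dist x z ^ dw / t) ^ (1 / (dw - 1))) ≤ 1 := by
      apply Real.exp_le_one_iff.2
      have hv : 0 ≤ (dist x z ^ dw / t) ^ (1 / (dw - 1)) :=
        Real.rpow_nonneg (div_nonneg (Real.rpow_nonneg dist_nonneg _) ht0.le) _
      nlinarith
    have h3 : 0 ≤ c₂ * t ^ (-α) := by positivity
    calc pk t x z ≤ c₂ * t ^ (-α) * Real.exp (-c₃ * (dist x z ^ dw / t) ^ (1 / (dw - 1))) := h1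
      _ ≤ c₂ * t ^ (-α) * 1 := mul_le_mul_of_nonneg_left h2 h3
      _ = c₂ * t ^ (-α) := mul_one _
  -- induction: integrability of slices and uniform bound for t ≥ 1/2
  have key : ∀ n : ℕ, ∀ t : ℝ, 0 < t → t ≤ 1 + n / 2 →
      ∀ x, Integrable (fun z => pk t x z) m ∧ (1/2 ≤ t → ∀ z, pk t x z ≤ K) := by
    intro n
    induction n with
    | zero =>
      intro t ht ht1 x
      norm_num at ht1
      constructor
      · exact (integrable_const (c₂ * t ^ (-α))).mono' (hmeas2 t x).aestronglyMeasurable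
          (Filter.Eventually.of_forall fun z => by
            rw [Real.norm_of_nonneg (hnonneg t ht x z)]; exact hbd0 t ht ht1 x z)
      · intro ht2 z
        have h4 : t ^ (-α) ≤ ((1:ℝ)/2) ^ (-α) :=
          Real.rpow_le_rpow_of_nonpos (by norm_num) ht2 (neg_nonpos.2 hα0.le)
        have h5 : ((1:ℝ)/2) ^ (-α) = (2:ℝ) ^ α := by
          rw [one_div, Real.inv_rpow (by norm_num : (0:ℝ) ≤ 2), Real.rpow_neg (by norm_num : (0:ℝ) ≤ 2), inv_inv]
        calc pk t x z ≤ c₂ * t ^ (-α) := hbd0 t ht ht1 x z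
          _ ≤ c₂ * ((1:ℝ)/2) ^ (-α) := mul_le_mul_of_nonneg_left h4 hc₂.le
          _ = K := by rw [hKdef, h5]
    | succ n ih =>
      intro t ht ht1 x
      by_cases hle : t ≤ 1 + n/2
      · exact ih t ht hle x
      push_neg at hle
      have hn0 : (0:ℝ) ≤ (n:ℝ)/2 := by positivity
      have ht' : 0 < t - 1/2 := by linarith
      have ht'' : t - 1/2 ≤ 1 + n/2 := by
        push_cast at ht1
        linarith
      have hhalf : ∀ w z, pk (1/2) w z ≤ K := by
        intro w z
        exact (ih (1/2) (by norm_num) (by linarith) w).2 (le_refl _) z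
      have hbound : ∀ z, pk t x z ≤ K := by
        intro z
        have heq : pk t x z = ∫ w, pk (t - 1/2) x w * pk (1/2) w z ∂m := by
          have h := hck (t - 1/2) (1/2) ht' (by norm_num) x z
          rw [show t - 1/2 + 1/2 = t by ring] at h
          exact h
        rw [heq]
        calc ∫ w, pk (t-1/2) x w * pk (1/2) w z ∂m
            ≤ ∫ w, pk (t-1/2) x w * K ∂m := by
              apply integral_mono_of_nonneg
              · exact Filter.Eventually.of_forall fun w =>
                  mul_nonneg (hnonneg _ ht' x w) (hnonneg _ (by norm_num) w z)
              · exact (ih (t - 1/2) ht' ht'' x).1.mul_const K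
              · exact Filter.Eventually.of_forall fun w =>
                  mul_le_mul_of_nonneg_left (hhalf w z) (hnonneg _ ht' x w)
          _ = (∫ w, pk (t-1/2) x w ∂m) * K := integral_mul_const K _
          _ ≤ 1 * K := mul_le_mul_of_nonneg_right (hsub _ ht' x) hK0.le
          _ = K := one_mul K
      refine ⟨?_, fun _ z => hbound z⟩
      exact (integrable_const K).mono' (hmeas2 t x).aestronglyMeasurable
        (Filter.Eventually.of_forall fun z => by
          rw [Real.norm_of_nonneg (hnonneg t ht x z)]; exact hbound z)
  have htail : ∀ t : ℝ, 1 ≤ t → ∀ x z, pk t x z ≤ K := by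
    intro t ht x z
    have hce := Nat.le_ceil (2*t)
    have h2 : t ≤ 1 + (Nat.ceil (2*t) : ℝ)/2 := by linarith
    exact (key (Nat.ceil (2*t)) t (by linarith) h2 x).2 (by linarith) z
  -- the tail integral bound
  obtain ⟨M₀, hM₀⟩ := aux_tail_integral m c₅ df γ hc₅ hγ0 hγdf (fun y r hr => (hvol y r hr).2)
  -- singletons are null
  have hsing : ∀ y : E, m {y} = 0 := by
    intro y
    refine le_antisymm ?_ zero_le
    have hb : ∀ n : ℕ, m {y} ≤ ENNReal.ofReal (c₅ * (1/((n:ℝ)+1))) := by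
      intro n
      set r : ℝ := 1/((n:ℝ)+1) with hrdef
      have hr0 : 0 < r := by positivity
      have hr1 : r ≤ 1 := by
        have hn : (0:ℝ) ≤ (n:ℝ) := Nat.cast_nonneg n
        rw [hrdef, div_le_one (by positivity)]
        linarith
      have h1 : m {y} ≤ m (Metric.ball y r) := by
        apply measure_mono
        intro z hz
        rw [mem_singleton_iff] at hz
        rw [hz]
        exact Metric.mem_ball_self hr0
      have h2 : m (Metric.ball y r) ≤ ENNReal.ofReal (c₅ * r ^ df) := by
        rw [← ENNReal.ofReal_toReal (measure_ne_top m _)]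
        exact ENNReal.ofReal_le_ofReal ((hvol y r ⟨hr0, hr1⟩).2)
      have h3 : c₅ * r ^ df ≤ c₅ * r := by
        have h4 : r ^ df ≤ r ^ (1:ℝ) := Real.rpow_le_rpow_of_exponent_ge hr0 hr1 hdf
        rw [Real.rpow_one] at h4
        nlinarith
      calc m {y} ≤ ENNReal.ofReal (c₅ * r^df) := h1.trans h2
        _ ≤ ENNReal.ofReal (c₅ * r) := ENNReal.ofReal_le_ofReal h3
    have hlim : Filter.Tendsto (fun n : ℕ => ENNReal.ofReal (c₅ * (1/((n:ℝ)+1))))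
        Filter.atTop (nhds 0) := by
      rw [show (0:ENNReal) = ENNReal.ofReal (c₅ * 0) by simp]
      apply ENNReal.tendsto_ofReal
      exact tendsto_one_div_add_atTop_nhds_zero_nat.const_mul c₅
    exact ge_of_tendsto' hlim hb
  -- distances are at most 1
  have hbddE : Bornology.IsBounded (Set.univ : Set E) := by
    by_contra h
    rw [Metric.diam_eq_zero_of_unbounded h] at hdiam
    norm_num at hdiam
  have hdist1 : ∀ x y : E, dist x y ≤ 1 := fun x y =>
    hdiam ▸ Metric.dist_le_diam_of_mem hbddE (mem_univ x) (mem_univ y)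
  -- the main pointwise bound on the resolvent
  obtain ⟨C₁, hC₁def⟩ : ∃ a : ℝ, a = A / (s - α + 1) + K := ⟨_, rfl⟩
  have hC₁ : 0 < C₁ := by
    rw [hC₁def]
    have := hsα1
    positivity
  have hFbound : ∀ y x, x ≠ y →
      (∫ t in Ioi (0:ℝ), Real.exp (-t) * pk t x y) ≤ C₁ * dist x y ^ (-(dw * s)) := by
    intro y x hxy
    obtain ⟨r, hrdef⟩ : ∃ a : ℝ, a = dist x y := ⟨_, rfl⟩
    have hr0 : 0 < r := by rw [hrdef]; exact dist_pos.2 hxy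
    have hr1 : r ≤ 1 := by rw [hrdef]; exact hdist1 x y
    obtain ⟨r', hr'def⟩ : ∃ a : ℝ, a = r ^ (-(dw*s)) := ⟨_, rfl⟩
    have hr'1 : 1 ≤ r' := by
      rw [hr'def]
      exact Real.one_le_rpow_of_pos_of_le_one_of_nonpos hr0 hr1
        (neg_nonpos.2 (by positivity))
    have hr'0 : 0 < r' := lt_of_lt_of_le one_pos hr'1
    rw [← hrdef, ← hr'def]
    have hpt1 : ∀ t ∈ Ioc (0:ℝ) 1, Real.exp (-t) * pk t x y ≤ A * r' * t ^ (s - α) := by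
      rintro t ⟨ht0, ht1⟩
      have hkb := hupper t ⟨ht0, ht1⟩ x y
      rw [← hrdef] at hkb
      obtain ⟨w, hwdef⟩ : ∃ a : ℝ, a = r ^ dw / t := ⟨_, rfl⟩
      have hw0 : 0 < w := by rw [hwdef]; exact div_pos (Real.rpow_pos_of_pos hr0 dw) ht0
      obtain ⟨v, hvdef⟩ : ∃ a : ℝ, a = w ^ (1/(dw-1)) := ⟨_, rfl⟩
      have hv0 : 0 < v := by rw [hvdef]; exact Real.rpow_pos_of_pos hw0 _
      rw [← hwdef, ← hvdef] at hkb
      have hu0 : 0 < c₃ * v := mul_pos hc₃ hv0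
      have hexp : Real.exp (-(c₃ * v)) ≤ C * (c₃ * v) ^ (-q) := hCexp _ hu0
      have hexp' : Real.exp (-c₃ * v) ≤ C * (c₃ * v) ^ (-q) := by
        rw [show -c₃ * v = -(c₃ * v) by ring]; exact hexp
      have hueq : (c₃ * v) ^ (-q) = c₃ ^ (-q) * (r' * t ^ s) := by
        rw [Real.mul_rpow hc₃.le hv0.le]
        congr 1
        rw [hvdef, ← Real.rpow_mul hw0.le]
        have hexps : 1/(dw-1) * (-q) = -s := by
          rw [hqdef]; field_simp
        rw [hexps, hwdef, Real.div_rpow (Real.rpow_nonneg (le_of_lt hr0) dw) ht0.le]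
        rw [← Real.rpow_mul hr0.le]
        rw [show dw * -s = -(dw*s) by ring]
        rw [← hr'def, Real.rpow_neg ht0.le, div_eq_mul_inv, inv_inv]
      have h1 : Real.exp (-t) * pk t x y ≤ pk t x y := by
        have hh := hnonneg t ht0 x y
        have he1 : Real.exp (-t) ≤ 1 := Real.exp_le_one_iff.2 (by linarith)
        calc Real.exp (-t) * pk t x y ≤ 1 * pk t x y := mul_le_mul_of_nonneg_right he1 hh
          _ = pk t x y := one_mul _
      have h2 : pk t x y ≤ c₂ * t ^ (-α) * (C * (c₃ * v) ^ (-q)) := by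
        refine le_trans hkb (mul_le_mul_of_nonneg_left ?_ (by positivity))
        calc Real.exp (-c₃ * v) ≤ C * (c₃ * v) ^ (-q) := hexp'
          _ ≤ C * (c₃ * v) ^ (-q) := le_refl _
      have h3 : c₂ * t ^ (-α) * (C * (c₃ ^ (-q) * (r' * t ^ s))) = A * r' * (t ^ (-α) * t ^ s) := by
        rw [hAdef]; ring
      have h4 : t ^ (-α) * t ^ s = t ^ (s - α) := by
        rw [← Real.rpow_add ht0]; congr 1; ring
      calc Real.exp (-t) * pk t x y ≤ pk t x y := h1
        _ ≤ c₂ * t ^ (-α) * (C * (c₃ * v) ^ (-q)) := h2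
        _ = A * r' * t ^ (s - α) := by rw [hueq, h3, h4]
    have hpt2 : ∀ t ∈ Ioi (1:ℝ), Real.exp (-t) * pk t x y ≤ K * Real.exp (-t) := by
      intro t ht
      rw [mul_comm K _]
      exact mul_le_mul_of_nonneg_left (htail t (le_of_lt ht) x y) (Real.exp_pos _).le
    set g : ℝ → ℝ := fun t => if t ≤ 1 then A * r' * t ^ (s - α) else K * Real.exp (-t) with hgdef
    have hg1int : IntegrableOn (fun t : ℝ => A * r' * t ^ (s - α)) (Ioc (0:ℝ) 1) volume := by
      have h : IntegrableOn (fun t : ℝ => t ^ (s - α)) (Ioc (0:ℝ) 1) volume := by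
        have h := intervalIntegral.intervalIntegrable_rpow' (a := 0) (b := 1) hsα
        rwa [intervalIntegrable_iff_integrableOn_Ioc_of_le zero_le_one] at h
      exact h.const_mul _
    have hg2int : IntegrableOn (fun t : ℝ => K * Real.exp (-t)) (Ioi (1:ℝ)) volume := by
      have h : IntegrableOn (fun x : ℝ => Real.exp (-1 * x)) (Ioi (1:ℝ)) volume :=
        exp_neg_integrableOn_Ioi 1 one_pos
      exact IntegrableOn.congr_fun (h.const_mul K) (fun t _ => by rw [neg_one_mul]) measurableSet_Ioi
    have hga : IntegrableOn g (Ioc (0:ℝ) 1) volume :=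
      hg1int.congr_fun (fun t ht => by rw [hgdef]; simp [ht.2]) measurableSet_Ioc
    have hgb : IntegrableOn g (Ioi (1:ℝ)) volume :=
      hg2int.congr_fun (fun t ht => by rw [hgdef]; simp [not_le.2 (mem_Ioi.1 ht)]) measurableSet_Ioi
    have hgint : IntegrableOn g (Ioi (0:ℝ)) volume := by
      rw [show Ioi (0:ℝ) = Ioc 0 1 ∪ Ioi 1 from (Ioc_union_Ioi_eq_Ioi zero_le_one).symm]
      exact hga.union hgb
    have hle : (∫ t in Ioi (0:ℝ), Real.exp (-t) * pk t x y) ≤ ∫ t in Ioi (0:ℝ), g t := by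
      apply integral_mono_of_nonneg
      · filter_upwards [ae_restrict_mem measurableSet_Ioi] with t ht
        exact mul_nonneg (Real.exp_pos _).le (hnonneg t ht x y)
      · exact hgint
      · filter_upwards [ae_restrict_mem measurableSet_Ioi] with t ht
        rcases le_or_gt t 1 with h1 | h1
        · rw [hgdef]; simp only [if_pos h1]; exact hpt1 t ⟨ht, h1⟩
        · rw [hgdef]; simp only [if_neg (not_le.2 h1)]; exact hpt2 t h1
    have hsplit2 : (∫ t in Ioi (0:ℝ), g t) = (∫ t in Ioc (0:ℝ) 1, g t) + ∫ t in Ioi (1:ℝ), g t := by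
      rw [show Ioi (0:ℝ) = Ioc 0 1 ∪ Ioi 1 from (Ioc_union_Ioi_eq_Ioi zero_le_one).symm]
      exact setIntegral_union Ioc_disjoint_Ioi_same measurableSet_Ioi hga hgb
    have hval1 : (∫ t in Ioc (0:ℝ) 1, g t) ≤ A * r' * (s - α + 1)⁻¹ := by
      have he1 : (∫ t in Ioc (0:ℝ) 1, g t) = ∫ t in Ioc (0:ℝ) 1, A * r' * t ^ (s - α) := by
        apply setIntegral_congr_fun measurableSet_Ioc
        intro t ht
        rw [hgdef]; simp [ht.2]
      rw [he1, integral_const_mul]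
      have he2 : (∫ t in Ioc (0:ℝ) 1, t ^ (s - α)) = (s - α + 1)⁻¹ := by
        rw [← intervalIntegral.integral_of_le zero_le_one]
        rw [integral_rpow (Or.inl hsα)]
        rw [Real.one_rpow, Real.zero_rpow (by linarith)]
        norm_num
      rw [he2]
    have hval2 : (∫ t in Ioi (1:ℝ), g t) ≤ K := by
      have he1 : (∫ t in Ioi (1:ℝ), g t) = ∫ t in Ioi (1:ℝ), K * Real.exp (-t) := by
        apply setIntegral_congr_fun measurableSet_Ioi
        intro t ht
        rw [hgdef]; simp [not_le.2 (mem_Ioi.1 ht)]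
      rw [he1, integral_const_mul, integral_exp_neg_Ioi]
      nlinarith [Real.exp_le_one_iff.2 (by norm_num : -(1:ℝ) ≤ 0), Real.exp_pos (-(1:ℝ)), hK0]
    calc (∫ t in Ioi (0:ℝ), Real.exp (-t) * pk t x y) ≤ ∫ t in Ioi (0:ℝ), g t := hle
      _ = (∫ t in Ioc (0:ℝ) 1, g t) + ∫ t in Ioi (1:ℝ), g t := hsplit2
      _ ≤ A * r' * (s - α + 1)⁻¹ + K := add_le_add hval1 hval2
      _ ≤ C₁ * r' := by
          rw [hC₁def]
          have : A * r' * (s - α + 1)⁻¹ = A / (s - α + 1) * r' := by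
            rw [div_eq_mul_inv]; ring
          rw [this]
          nlinarith [hK0.le, hr'1]
  -- conclude
  refine ⟨C₁ ^ p * M₀, ?_⟩
  intro y
  have hae : ∀ᵐ x ∂m, x ≠ y := by
    rw [Filter.eventually_iff, mem_ae_iff]
    have : {x : E | x ≠ y}ᶜ = {y} := by
      ext z; simp
    rw [this]
    exact hsing y
  have final : ∫ x, (∫ t in Ioi (0:ℝ), Real.exp (-t) * pk t x y) ^ p ∂m
      ≤ ∫ x, C₁ ^ p * dist x y ^ (-γ) ∂m := by
    apply integral_mono_of_nonneg
    · refine Filter.Eventually.of_forall fun x => ?_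
      apply pow_nonneg
      exact setIntegral_nonneg measurableSet_Ioi fun t ht =>
        mul_nonneg (Real.exp_pos _).le (hnonneg t ht x y)
    · exact ((hM₀ y).1.const_mul _)
    · filter_upwards [hae] with x hxy
      have h1 := hFbound y x hxy
      have hFnn : 0 ≤ ∫ t in Ioi (0:ℝ), Real.exp (-t) * pk t x y :=
        setIntegral_nonneg measurableSet_Ioi fun t ht =>
          mul_nonneg (Real.exp_pos _).le (hnonneg t ht x y)
      calc (∫ t in Ioi (0:ℝ), Real.exp (-t) * pk t x y) ^ p
          ≤ (C₁ * dist x y ^ (-(dw*s))) ^ p := pow_le_pow_left₀ hFnn h1 p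
        _ = C₁ ^ p * (dist x y ^ (-(dw*s))) ^ p := mul_pow _ _ p
        _ = C₁ ^ p * dist x y ^ (-γ) := by
            congr 1
            rw [← Real.rpow_natCast (dist x y ^ (-(dw*s))) p, ← Real.rpow_mul dist_nonneg]
            congr 1
            rw [hγdef]; push_cast; ring
  calc ∫ x, (∫ t in Ioi (0:ℝ), Real.exp (-t) * pk t x y) ^ p ∂m
      ≤ ∫ x, C₁ ^ p * dist x y ^ (-γ) ∂m := final
    _ = C₁ ^ p * ∫ x, dist x y ^ (-γ) ∂m := integral_const_mul _ _
    _ ≤ C₁ ^ p * M₀ := mul_le_mul_of_nonneg_left (hM₀ y).2 (by positivity)
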